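/- If t is a non-nil full balanced binary tree with n leaves (so n ≥ 1), then its edge-length height, namely Tree.height t − 1, is at most log_φ(n) (as a real number). (This is the paper's Lemma: a tournament tree with n > 0 leaves has height at most log_φ(n).) -/

import Mathlib

/-- The golden ratio `(1 + √5)/2`. -/
noncomputable def goldenRatioReal : ℝ := (1 + Real.sqrt 5) / 2

/-- A binary tree is full if every node has either both subtrees nil or both non-nil. -/
def IsFullTree {α : Type*} : Tree α → Prop
  | BinaryTree.nil => True
  | BinaryTree.node _ l r =>
      ((l = Tree.nil ∧ r = Tree.nil) ∨ (l ≠ Tree.nil ∧ r ≠ Tree.nil)) ∧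
      IsFullTree l ∧ IsFullTree r

/-- A binary tree is balanced if at every node the heights of the two subtrees
differ by at most 1. -/
def IsBalancedTree {α : Type*} : Tree α → Prop
  | BinaryTree.nil => True
  | BinaryTree.node _ l r =>
      (Tree.height l ≤ Tree.height r + 1 ∧ Tree.height r ≤ Tree.height l + 1) ∧
      IsBalancedTree l ∧ IsBalancedTree r

lemma goldenRatioReal_eq : goldenRatioReal = Real.goldenRatio := rfl

lemma one_lt_goldenRatioReal : 1 < goldenRatioReal := by
  rw [goldenRatioReal_eq]; exact Real.one_lt_goldenRatio

lemma gold_pow_step (m : ℕ) (hm : 1 ≤ m) :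
    goldenRatioReal ^ m ≤ goldenRatioReal ^ (m - 1) + goldenRatioReal ^ (m - 2) := by
  rw [goldenRatioReal_eq]
  match m, hm with
  | 1, _ =>
      have := Real.goldenRatio_lt_two
      norm_num
      linarith
  | (k+2), _ =>
      have : Real.goldenRatio ^ (k + 2) = Real.goldenRatio ^ (k + 1) + Real.goldenRatio ^ k := by
        have h := Real.goldenRatio_sq
        calc Real.goldenRatio ^ (k + 2) = Real.goldenRatio ^ k * Real.goldenRatio ^ 2 := by ring
          _ = Real.goldenRatio ^ k * (Real.goldenRatio + 1) := by rw [h]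
          _ = Real.goldenRatio ^ (k + 1) + Real.goldenRatio ^ k := by ring
      rw [show k + 2 - 1 = k + 1 from rfl, show k + 2 - 2 = k from rfl]
      linarith [this]

lemma height_pos_of_ne_nil {α : Type*} (t : Tree α) (h : t ≠ Tree.nil) : 1 ≤ t.height := by
  cases t with
  | nil => exact absurd rfl h
  | node a l r => simp [Tree.height]

lemma gold_pow_le_numLeaves {α : Type*} : ∀ (t : Tree α), t ≠ Tree.nil → IsFullTree t →
    IsBalancedTree t → goldenRatioReal ^ (t.height - 1) ≤ (t.numLeaves : ℝ) := by
  intro t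
  induction t with
  | nil => intro h; exact absurd rfl h
  | node a l r ihl ihr =>
    intro _ hfull hbal
    have hφ1 : (1:ℝ) ≤ goldenRatioReal := le_of_lt one_lt_goldenRatioReal
    rcases hfull.1 with ⟨hl, hr⟩ | ⟨hl, hr⟩
    · subst hl; subst hr
      norm_num [Tree.height, Tree.numLeaves]
    · have Hl := ihl hl hfull.2.1 hbal.2.1
      have Hr := ihr hr hfull.2.2 hbal.2.2
      have hlh : 1 ≤ l.height := height_pos_of_ne_nil l hl
      have hrh : 1 ≤ r.height := height_pos_of_ne_nil r hr
      have hb1 := hbal.1.1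
      have hb2 := hbal.1.2
      have hmono : ∀ i j : ℕ, i ≤ j → goldenRatioReal ^ i ≤ goldenRatioReal ^ j :=
        fun i j hij => pow_le_pow_right₀ hφ1 hij
      have key : goldenRatioReal ^ (max l.height r.height) ≤ (l.numLeaves : ℝ) + r.numLeaves := by
        rcases le_total l.height r.height with hcmp | hcmp
        · have hmax : max l.height r.height = r.height := max_eq_right hcmp
          rw [hmax]
          have step := gold_pow_step r.height hrh
          have h1 : goldenRatioReal ^ (r.height - 1) ≤ (r.numLeaves : ℝ) := Hr
          have h2 : goldenRatioReal ^ (r.height - 2) ≤ (l.numLeaves : ℝ) := by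
            refine le_trans (hmono _ _ ?_) Hl
            dsimp only [Tree.height] at hb1 hb2 ⊢
            omega
          linarith
        · have hmax : max l.height r.height = l.height := max_eq_left hcmp
          rw [hmax]
          have step := gold_pow_step l.height hlh
          have h1 : goldenRatioReal ^ (l.height - 1) ≤ (l.numLeaves : ℝ) := Hl
          have h2 : goldenRatioReal ^ (l.height - 2) ≤ (r.numLeaves : ℝ) := by
            refine le_trans (hmono _ _ ?_) Hr
            dsimp only [Tree.height] at hb1 hb2 ⊢
            omega
          linarith
      have hh : Tree.height (Tree.node a l r) - 1 = max l.height r.height := by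
        simp [Tree.height]
      rw [hh]
      simpa [Tree.numLeaves] using key

/-- A tournament tree (non-nil full balanced binary tree) with `n` leaves has
edge-length height at most `log_φ n`. -/
theorem height_le_logb_goldenRatio_numLeaves {α : Type*} (t : Tree α)
    (hne : t ≠ Tree.nil) (hfull : IsFullTree t) (hbal : IsBalancedTree t) :
    ((Tree.height t - 1 : ℕ) : ℝ) ≤ Real.logb goldenRatioReal (Tree.numLeaves t) := by
  have hkey := gold_pow_le_numLeaves t hne hfull hbal
  have hn : (0:ℝ) < (t.numLeaves : ℝ) := by exact_mod_cast t.numLeaves_pos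
  rw [Real.le_logb_iff_rpow_le one_lt_goldenRatioReal hn]
  rw [Real.rpow_natCast]
  exact hkey
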